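/- Let s > 1 be real and let y : [0,∞) → ℝ be a continuous function satisfying 0 ≤ y(t) ≤ C₁ + C₂·y(t)^s for all t ≥ 0, where C₁, C₂ > 0 and C₁ < ((s-1)/s)·(s·C₂)^{1/(1-s)}. Set A = (s·C₂)^{1/(1-s)}. Then there exist constants a₁, a₂ with 0 < a₁ < A < a₂ < ∞ such that: if y(0) < A then y(t) ≤ a₁ for all t ≥ 0, and if y(0) > A then y(t) ≥ a₂ for all t ≥ 0. -/

import Mathlib

/-- Dichotomy lemma for continuous functions satisfying a superlinear
self-bounding inequality `0 ≤ y t ≤ C₁ + C₂ * (y t)^s` with `s > 1`. -/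
theorem stmt_0 (s C₁ C₂ : ℝ) (hs : 1 < s) (hC₁ : 0 < C₁) (hC₂ : 0 < C₂)
    (hsmall : C₁ < (s - 1) / s * (s * C₂) ^ ((1 : ℝ) / (1 - s)))
    (y : ℝ → ℝ) (hy : ContinuousOn y (Set.Ici 0))
    (hbound : ∀ t : ℝ, 0 ≤ t → 0 ≤ y t ∧ y t ≤ C₁ + C₂ * (y t) ^ s) :
    ∃ a₁ a₂ : ℝ, 0 < a₁ ∧ a₁ < (s * C₂) ^ ((1 : ℝ) / (1 - s)) ∧
      (s * C₂) ^ ((1 : ℝ) / (1 - s)) < a₂ ∧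
      ((y 0 < (s * C₂) ^ ((1 : ℝ) / (1 - s))) → ∀ t : ℝ, 0 ≤ t → y t ≤ a₁) ∧
      ((y 0 > (s * C₂) ^ ((1 : ℝ) / (1 - s))) → ∀ t : ℝ, 0 ≤ t → a₂ ≤ y t) := by
  set A : ℝ := (s * C₂) ^ ((1 : ℝ) / (1 - s)) with hAdef
  have hs0 : (0:ℝ) < s := by linarith
  have h1s : (1:ℝ) - s ≠ 0 := by
    intro h; linarith
  have hsC : 0 < s * C₂ := by positivity
  have hA : 0 < A := Real.rpow_pos_of_pos hsC _
  -- key algebraic identity : C₂ * A ^ s = A / s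
  have hAs : A ^ s = (s * C₂) ^ (s / (1 - s)) := by
    rw [hAdef, ← Real.rpow_mul hsC.le]
    congr 1
    field_simp
  have key : C₂ * A ^ s = A / s := by
    rw [hAs, eq_div_iff hs0.ne', hAdef]
    have : C₂ * (s * C₂) ^ (s / (1 - s)) * s = (s * C₂) ^ (1:ℝ) * (s * C₂) ^ (s / (1 - s)) := by
      rw [Real.rpow_one]; ring
    rw [this, ← Real.rpow_add hsC]
    congr 1
    field_simp
    ring
  -- define g x = x - C₂ x^s, then g A > C₁
  set g : ℝ → ℝ := fun x => x - C₂ * x ^ s with hgdef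
  have hgA : C₁ < g A := by
    have : g A = A - A / s := by rw [hgdef]; dsimp only; rw [key]
    rw [this]
    have : A - A / s = (s - 1) / s * A := by field_simp
    rw [this]
    exact hsmall
  -- continuity of g at A, get δ
  have hgc : ContinuousAt g A := by
    apply ContinuousAt.sub continuousAt_id
    exact (Real.continuousAt_rpow_const A s (Or.inl hA.ne')).const_mul C₂
  have hev : ∀ᶠ x in nhds A, C₁ < g x := hgc.eventually (eventually_gt_nhds hgA)
  obtain ⟨δ, hδ, hball⟩ := Metric.eventually_nhds_iff.mp hev
  set ε : ℝ := min (δ / 2) (A / 2) with hεdef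
  have hε : 0 < ε := lt_min (by linarith) (by linarith)
  have hεδ : ε < δ := lt_of_le_of_lt (min_le_left _ _) (by linarith)
  have hεA : ε < A := lt_of_le_of_lt (min_le_right _ _) (by linarith)
  -- gap : y never lies in (A - ε, A + ε)
  have hgap : ∀ t : ℝ, 0 ≤ t → y t ≤ A - ε ∨ A + ε ≤ y t := by
    intro t ht
    by_contra hcon
    push_neg at hcon
    obtain ⟨h1, h2⟩ := hcon
    have hdist : dist (y t) A < δ := by
      rw [Real.dist_eq, abs_lt]
      constructor <;> linarith
    have hgy : C₁ < g (y t) := hball hdist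
    have hb := (hbound t ht).2
    rw [hgdef] at hgy
    dsimp only at hgy
    linarith
  refine ⟨A - ε, A + ε, by linarith, by linarith, by linarith, ?_, ?_⟩
  · intro h0 t ht
    have h0' : y 0 ≤ A - ε := by
      rcases hgap 0 le_rfl with h | h
      · exact h
      · linarith
    rcases hgap t ht with h | h
    · exact h
    · exfalso
      have hsub : Set.Icc (0:ℝ) t ⊆ Set.Ici 0 := Set.Icc_subset_Ici_self
      have := intermediate_value_Icc ht (hy.mono hsub)
      have hAmem : A ∈ Set.Icc (y 0) (y t) := ⟨by linarith, by linarith⟩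
      obtain ⟨c, hc, hyc⟩ := this hAmem
      rcases hgap c hc.1 with h' | h' <;> rw [hyc] at h' <;> linarith
  · intro h0 t ht
    have h0' : A + ε ≤ y 0 := by
      rcases hgap 0 le_rfl with h | h
      · linarith
      · exact h
    rcases hgap t ht with h | h
    · exfalso
      have hsub : Set.Icc (0:ℝ) t ⊆ Set.Ici 0 := Set.Icc_subset_Ici_self
      have := intermediate_value_Icc' ht (hy.mono hsub)
      have hAmem : A ∈ Set.Icc (y t) (y 0) := ⟨by linarith, by linarith⟩
      obtain ⟨c, hc, hyc⟩ := this hAmem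
      rcases hgap c hc.1 with h' | h' <;> rw [hyc] at h' <;> linarith
    · exact h
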